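/- Combining the Galois-descent identifications with the matrix characterization of comonoid morphisms: for X, Y finite étale over a field k, the set of comonoid morphisms from the 0-cycle coalgebra of X to that of Y (matrices in Z_0(X ×_k Y) ≅ ℚ-valued functions on closed points of X ×_k Y satisfying the counit and comultiplication equations) is in natural bijection with the set Hom_k(X, Y) of k-scheme morphisms from X to Y. -/

import Mathlib

open scoped TensorProduct Kronecker BigOperators

/-- Comultiplication matrix (diagonal) of a finite set of points. -/
def deltaM (X : Type) [DecidableEq X] : Matrix (X × X) X ℚ :=
  fun p x => if x = p.1 ∧ x = p.2 then 1 else 0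

/-- Counit matrix (all-ones row vector). -/
def epsM (X : Type) : Matrix Unit X ℚ := fun _ _ => 1

/-- The comonoid-morphism equations for a matrix `C` (rows: points of `Y`, columns:
points of `X`): compatibility with the diagonal comultiplications and the counits. -/
def Eqns {X Y : Type} [Fintype X] [Fintype Y] [DecidableEq X] [DecidableEq Y]
    (C : Matrix Y X ℚ) : Prop :=
  (C ⊗ₖ C) * deltaM X = deltaM Y * C ∧ epsM Y * C = epsM X

set_option maxHeartbeats 1000000
set_option linter.unusedSectionVars false

section MatrixAux
variable {X Y : Type} [Fintype X] [Fintype Y] [DecidableEq X] [DecidableEq Y]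

theorem eqns_iff (C : Matrix Y X ℚ) : Eqns C ↔
    ((∀ q₁ q₂ p, C q₁ p * C q₂ p = if q₁ = q₂ then C q₁ p else 0)
      ∧ ∀ p, (∑ q, C q p) = 1) := by
  have h1 : ∀ q₁ q₂ p, ((C ⊗ₖ C) * deltaM X) (q₁, q₂) p = C q₁ p * C q₂ p := by
    intro q₁ q₂ p
    rw [Matrix.mul_apply]
    simp [deltaM, Matrix.kroneckerMap_apply, ite_and, Fintype.sum_prod_type,
      mul_ite, mul_zero, mul_one, Finset.sum_ite_eq, Finset.sum_ite_eq']
  have h2 : ∀ q₁ q₂ p, (deltaM Y * C) (q₁, q₂) p = if q₁ = q₂ then C q₁ p else 0 := by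
    intro q₁ q₂ p
    rw [Matrix.mul_apply]
    simp only [deltaM, ite_and, ite_mul, one_mul, zero_mul]
    rw [Finset.sum_ite_eq' Finset.univ q₁ (fun y => if y = q₂ then C y p else 0)]
    simp only [Finset.mem_univ, if_true]
  have h3 : ∀ p, (epsM Y * C) () p = ∑ q, C q p := by
    intro p; rw [Matrix.mul_apply]; simp [epsM]
  constructor
  · rintro ⟨ha, hb⟩
    constructor
    · intro q₁ q₂ p
      rw [← h1, ← h2, ha]
    · intro p
      rw [← h3, hb]; rfl
  · rintro ⟨ha, hb⟩
    constructor
    · ext ⟨q₁, q₂⟩ p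
      rw [h1, h2, ha]
    · ext u p
      rw [show u = () from rfl, h3, hb]; rfl

theorem eqns_graph {C : Matrix Y X ℚ} (h : Eqns C) (p : X) : ∃! q : Y, C q p = 1 := by
  rw [eqns_iff] at h
  have hval : ∀ q, C q p = 0 ∨ C q p = 1 := by
    intro q
    have := h.1 q q p
    rw [if_pos rfl] at this
    have h0 : C q p * (C q p - 1) = 0 := by nlinarith [this]
    rcases mul_eq_zero.mp h0 with h' | h'
    · exact Or.inl h'
    · exact Or.inr (by linarith [h'])
  have hex : ∃ q, C q p = 1 := by
    by_contra hne
    push_neg at hne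
    have : ∀ q, C q p = 0 := fun q => (hval q).resolve_right (hne q)
    have hs := h.2 p
    rw [Finset.sum_congr rfl (fun q _ => this q)] at hs
    simp at hs
  obtain ⟨q, hq⟩ := hex
  refine ⟨q, hq, fun q' hq' => ?_⟩
  by_contra hne
  have := h.1 q' q p
  rw [if_neg hne, hq, hq'] at this
  norm_num at this

theorem graph_eqns (gr : X → Y) :
    Eqns (fun q p => if q = gr p then 1 else 0) := by
  refine (eqns_iff _).mpr ?_
  constructor
  · intro q₁ q₂ p
    by_cases h1 : q₁ = gr p <;> by_cases h2 : q₂ = gr p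
    · have hq : q₁ = q₂ := h1.trans h2.symm
      simp [h1, h2, hq]
    · have hq : q₁ ≠ q₂ := fun e => h2 (e ▸ h1)
      simp [h1, h2, hq]
      exact fun he => h2 he.symm
    · have hq : q₁ ≠ q₂ := fun e => h1 (e.symm ▸ h2)
      simp [h1, h2, hq]
    · by_cases hq : q₁ = q₂ <;> simp [h1, h2, hq]
  · intro p
    simp [Finset.sum_ite_eq]
end MatrixAux

section Aux
variable {k kbar : Type} [Field k] [Field kbar] [Algebra k kbar] [IsAlgClosure k kbar]
variable {R : Type} [CommRing R] [Algebra k R]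

/-- Existence of a point with given maximal kernel. -/
theorem exists_algHom_ker_eq [Module.Finite k R] (m : Ideal R) [m.IsMaximal] :
    ∃ σ : R →ₐ[k] kbar, RingHom.ker σ.toRingHom = m := by
  letI : Field (R ⧸ m) := Ideal.Quotient.field m
  haveI : Module.Finite k (R ⧸ m) :=
    Module.Finite.of_surjective (Ideal.Quotient.mkₐ k m).toLinearMap
      (Ideal.Quotient.mkₐ_surjective k m)
  haveI : Algebra.IsAlgebraic k (R ⧸ m) := Algebra.IsAlgebraic.of_finite k _
  haveI : NoZeroSMulDivisors k (R ⧸ m) :=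
    inferInstance
  haveI : NoZeroSMulDivisors k kbar :=
    inferInstance
  haveI : IsAlgClosed kbar := IsAlgClosure.isAlgClosed k
  let ι : (R ⧸ m) →ₐ[k] kbar := IsAlgClosed.lift
  refine ⟨ι.comp (Ideal.Quotient.mkₐ k m), ?_⟩
  ext x
  simp only [RingHom.mem_ker, AlgHom.toRingHom_eq_coe, RingHom.coe_coe, AlgHom.coe_comp,
    Function.comp_apply, Ideal.Quotient.mkₐ_eq_mk]
  constructor
  · intro hx
    have : (Ideal.Quotient.mk m) x = 0 := by
      apply RingHom.injective ι.toRingHom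
      simpa using hx
    rwa [Ideal.Quotient.eq_zero_iff_mem] at this
  · intro hx
    rw [← Ideal.Quotient.eq_zero_iff_mem] at hx
    rw [hx, map_zero]

/-- Two points with the same kernel are conjugate by an embedding of `kbar`. -/
theorem conj_of_ker_eq [IsArtinianRing R] (σ σ' : R →ₐ[k] kbar)
    (h : RingHom.ker σ.toRingHom = RingHom.ker σ'.toRingHom) :
    ∃ τ : kbar →ₐ[k] kbar, σ' = τ.comp σ := by
  haveI : IsAlgClosed kbar := IsAlgClosure.isAlgClosed k
  set I := RingHom.ker σ.toRingHom with hI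
  haveI hIp : I.IsPrime := RingHom.ker_isPrime _
  haveI : I.IsMaximal := IsArtinianRing.isMaximal_of_isPrime I
  letI : Field (R ⧸ I) := Ideal.Quotient.field I
  let σb : (R ⧸ I) →ₐ[k] kbar := Ideal.Quotient.liftₐ I σ (fun a ha => ha)
  let σb' : (R ⧸ I) →ₐ[k] kbar := Ideal.Quotient.liftₐ I σ' (fun a ha => by rw [h] at ha; exact RingHom.mem_ker.mp ha)
  have hσb : ∀ x : R, σb (Ideal.Quotient.mk I x) = σ x := fun x => rfl
  have hσb' : ∀ x : R, σb' (Ideal.Quotient.mk I x) = σ' x := fun x => rfl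
  -- the image of σb as an intermediate field
  let L : IntermediateField k kbar := σb.fieldRange
  haveI : Algebra.IsAlgebraic (↥L) kbar := Algebra.IsAlgebraic.tower_top (K := k) ↥L
  let eqv : (R ⧸ I) ≃ₐ[k] L := AlgEquiv.ofInjectiveField σb
  obtain ⟨τ, hτ⟩ := IsAlgClosed.surjective_restrictDomain_of_isAlgebraic
    (K := k) (L := ↥L) (E := kbar) (M := kbar) (σb'.comp (eqv.symm : L →ₐ[k] (R ⧸ I)))
  refine ⟨τ, ?_⟩
  ext r
  have h1 : τ (σ r) = (AlgHom.restrictDomain (↥L) τ) (eqv (Ideal.Quotient.mk I r)) := by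
    simp only [AlgHom.restrictDomain, AlgHom.comp_apply]
    congr 1
  have h2 : (AlgHom.restrictDomain (↥L) τ) (eqv (Ideal.Quotient.mk I r))
      = (σb'.comp (eqv.symm : ↥L →ₐ[k] (R ⧸ I))) (eqv (Ideal.Quotient.mk I r)) := by
    rw [show AlgHom.restrictDomain (↥L) τ = σb'.comp (eqv.symm : ↥L →ₐ[k] (R ⧸ I)) from hτ]
  rw [AlgHom.comp_apply, h1, h2]
  simp only [AlgHom.comp_apply, AlgHom.coe_coe, AlgEquiv.symm_apply_apply]
  show σ' r = σb' (eqv.symm (eqv (Ideal.Quotient.mk I r)))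
  rw [AlgEquiv.symm_apply_apply]
  exact (hσb' r).symm

theorem ker_comp_left (τ : kbar →ₐ[k] kbar) (σ : R →ₐ[k] kbar) :
    RingHom.ker (τ.comp σ).toRingHom = RingHom.ker σ.toRingHom := by
  ext x
  simp only [RingHom.mem_ker, AlgHom.toRingHom_eq_coe, RingHom.coe_coe, AlgHom.coe_comp,
    Function.comp_apply]
  constructor
  · intro h
    apply RingHom.injective τ.toRingHom
    simpa using h
  · intro h; rw [h, map_zero]

/-- Points with a fixed kernel correspond to embeddings of the residue field. -/
noncomputable def kerFiberEquiv (I : Ideal R) [I.IsMaximal] :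
    {σ' : R →ₐ[k] kbar // RingHom.ker σ'.toRingHom = I} ≃ ((R ⧸ I) →ₐ[k] kbar) where
  toFun σ' := Ideal.Quotient.liftₐ I σ'.1 (fun a ha => by
    rw [← σ'.2] at ha; exact RingHom.mem_ker.mp ha)
  invFun ψ := ⟨ψ.comp (Ideal.Quotient.mkₐ k I), by
    ext x
    simp only [RingHom.mem_ker, AlgHom.toRingHom_eq_coe, RingHom.coe_coe, AlgHom.coe_comp,
      Function.comp_apply, Ideal.Quotient.mkₐ_eq_mk]
    rw [← Ideal.Quotient.eq_zero_iff_mem (I := I)]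
    constructor
    · intro hx
      by_contra hne
      exact hne (by
        have : Function.Injective ψ := by
          letI : Field (R ⧸ I) := Ideal.Quotient.field I
          exact RingHom.injective ψ.toRingHom
        exact this (by simpa using hx))
    · intro hx; rw [hx, map_zero]⟩
  left_inv σ' := by
    apply Subtype.ext
    ext x
    rfl
  right_inv ψ := by
    apply AlgHom.ext
    intro q
    obtain ⟨x, rfl⟩ := Ideal.Quotient.mk_surjective q
    rfl

theorem finrank_range_eq_card [Module.Finite k R] [Algebra.FormallyUnramified k R]
    (σ : R →ₐ[k] kbar) :
    Module.finrank k ↥σ.range =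
      Nat.card {σ' : R →ₐ[k] kbar // RingHom.ker σ'.toRingHom = RingHom.ker σ.toRingHom} := by
  haveI : IsArtinianRing R := isArtinian_of_tower k inferInstance
  set I := RingHom.ker σ.toRingHom with hI
  haveI hIp : I.IsPrime := RingHom.ker_isPrime _
  haveI : I.IsMaximal := IsArtinianRing.isMaximal_of_isPrime I
  letI : Field (R ⧸ I) := Ideal.Quotient.field I
  haveI : Module.Finite k (R ⧸ I) :=
    Module.Finite.of_surjective (Ideal.Quotient.mkₐ k I).toLinearMap
      (Ideal.Quotient.mkₐ_surjective k I)
  haveI : Algebra.IsSeparable k (R ⧸ I) := Algebra.FormallyUnramified.isSeparable k (R ⧸ I)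
  haveI : IsAlgClosed kbar := IsAlgClosure.isAlgClosed k
  have h1 : Module.finrank k ↥σ.range = Module.finrank k (R ⧸ I) := by
    have e : (R ⧸ RingHom.ker σ) ≃ₐ[k] ↥σ.range := Ideal.quotientKerEquivRange σ
    rw [show RingHom.ker σ = I from rfl] at e
    exact (e.toLinearEquiv.finrank_eq).symm
  rw [h1, ← AlgHom.card (F := k) (E := R ⧸ I) kbar]
  rw [Nat.card_congr (kerFiberEquiv (kbar := kbar) I), Nat.card_eq_fintype_card]

theorem exists_forall_eval [Module.Finite k R] [Fintype (R →ₐ[k] kbar)]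
    (u : (R →ₐ[k] kbar) → kbar)
    (hequiv : ∀ (τ : kbar →ₐ[k] kbar) (p : R →ₐ[k] kbar), u (τ.comp p) = τ (u p))
    (hrange : ∀ p : R →ₐ[k] kbar, u p ∈ p.range) :
    ∃ a : R, ∀ p : R →ₐ[k] kbar, p a = u p := by
  haveI : IsArtinianRing R := isArtinian_of_tower k inferInstance
  classical
  set ι : Finset (Ideal R) :=
    Finset.image (fun p : R →ₐ[k] kbar => RingHom.ker p.toRingHom) Finset.univ with hι
  have hmem : ∀ p : R →ₐ[k] kbar, RingHom.ker p.toRingHom ∈ ι := fun p =>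
    Finset.mem_image_of_mem _ (Finset.mem_univ p)
  have hmax : ∀ J ∈ ι, J.IsMaximal := by
    intro J hJ
    obtain ⟨p, -, rfl⟩ := Finset.mem_image.mp hJ
    haveI : (RingHom.ker p.toRingHom).IsPrime := RingHom.ker_isPrime _
    exact IsArtinianRing.isMaximal_of_isPrime _
  -- choose a point for each kernel in the image
  have hpt : ∀ J : {x // x ∈ ι}, ∃ p : R →ₐ[k] kbar, RingHom.ker p.toRingHom = J.1 := by
    rintro ⟨J, hJ⟩
    obtain ⟨p, -, rfl⟩ := Finset.mem_image.mp hJ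
    exact ⟨p, rfl⟩
  choose P hP using hpt
  have hav : ∀ J : {x // x ∈ ι}, ∃ a : R, P J a = u (P J) := fun J => hrange (P J)
  choose av hav using hav
  -- CRT
  have hco : Pairwise (Function.onFun IsCoprime fun J : {x // x ∈ ι} => J.1) := by
    intro J J' hne
    exact Ideal.isCoprime_iff_sup_eq.mpr
      ((hmax _ J.2).coprime_of_ne (hmax _ J'.2) (fun h => hne (Subtype.ext h)))
  obtain ⟨q, hq⟩ := Ideal.quotientInfToPiQuotient_surj hco
    (fun J => Ideal.Quotient.mk J.1 (av J))
  obtain ⟨a, rfl⟩ := Ideal.Quotient.mk_surjective q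
  have key : ∀ J : {x // x ∈ ι}, P J a = u (P J) := by
    intro J
    have h1 : Ideal.Quotient.mk J.1 a = Ideal.Quotient.mk J.1 (av J) := by
      rw [← Ideal.quotientInfToPiQuotient_mk' (fun J : {x // x ∈ ι} => J.1) a J, hq]
    have h2 : a - av J ∈ J.1 := Ideal.Quotient.eq.mp h1
    rw [← hP J] at h2
    have h3 : P J a - P J (av J) = 0 := by
      rw [← map_sub]; exact RingHom.mem_ker.mp h2
    rw [sub_eq_zero.mp h3, hav J]
  refine ⟨a, fun p => ?_⟩
  set J : {x // x ∈ ι} := ⟨RingHom.ker p.toRingHom, hmem p⟩ with hJ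
  obtain ⟨τ, hτ⟩ := conj_of_ker_eq (P J) p (by rw [hP J])
  rw [hτ, AlgHom.comp_apply, key J, ← hequiv τ (P J), ← hτ]

theorem eval_eq_zero [Module.Finite k R] [Algebra.FormallyUnramified k R]
    {a : R} (h : ∀ p : R →ₐ[k] kbar, p a = 0) : a = 0 := by
  haveI : IsArtinianRing R := isArtinian_of_tower k inferInstance
  haveI : IsReduced R := Algebra.FormallyUnramified.isReduced_of_field k R
  have hmem : a ∈ Ideal.jacobson (⊥ : Ideal R) := by
    rw [Ideal.jacobson]
    rw [Ideal.mem_sInf]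
    rintro J ⟨-, hJ⟩
    haveI := hJ
    obtain ⟨σ, hσ⟩ := exists_algHom_ker_eq (k := k) (kbar := kbar) J
    rw [← hσ]
    exact RingHom.mem_ker.mpr (h σ)
  obtain ⟨n, hn⟩ := IsArtinianRing.isNilpotent_jacobson_bot (R := R)
  have : a ^ n ∈ (Ideal.jacobson (⊥ : Ideal R)) ^ n := Ideal.pow_mem_pow hmem n
  rw [hn] at this
  have : a ^ n = 0 := Ideal.mem_bot.mp this
  exact IsReduced.eq_zero a ⟨n, this⟩

end Aux


/-- For `X = Spec A`, `Y = Spec B` finite étale over a field `k`, the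
set of comonoid morphisms from the 0-cycle coalgebra of `X` to that of `Y` — i.e.
0-cycles in `Z_0(X ×_k Y)` (ℚ-valued functions on the closed points of `X ×_k Y`)
whose base change to `k̄` satisfies the counit and comultiplication matrix equations
— is in natural bijection with the set `Hom_k(X,Y)` of `k`-scheme morphisms
(equivalently, `k`-algebra maps `B →ₐ[k] A`); naturality is recorded by the
condition that the graph of the induced map on `k̄`-points (`p ↦ p ∘ h`) is the
support of the base-changed cycle. -/
theorem stmt19 (k kbar A B : Type) [Field k] [Field kbar] [Algebra k kbar]
    [IsAlgClosure k kbar]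
    [CommRing A] [Algebra k A] [Algebra.Etale k A] [Module.Finite k A]
    [CommRing B] [Algebra k B] [Algebra.Etale k B] [Module.Finite k B]
    [Fintype (A →ₐ[k] kbar)] [Fintype (B →ₐ[k] kbar)]
    [DecidableEq (A →ₐ[k] kbar)] [DecidableEq (B →ₐ[k] kbar)]
    (π : ((A ⊗[k] B) →ₐ[k] kbar) → MaximalSpectrum (A ⊗[k] B))
    (hπ : ∀ σ, (π σ).asIdeal = RingHom.ker σ.toRingHom)
    (j : ((A ⊗[k] B) →ₐ[k] kbar) ≃ ((A →ₐ[k] kbar) × (B →ₐ[k] kbar)))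
    (hj : ∀ σ, (∀ a : A, (j σ).1 a = σ (a ⊗ₜ 1)) ∧ (∀ b : B, (j σ).2 b = σ (1 ⊗ₜ b))) :
    -- the base-changed cycle viewed as a matrix (rows: `Y(k̄)`, columns: `X(k̄)`)
    letI M : (MaximalSpectrum (A ⊗[k] B) →₀ ℚ) →
        Matrix (B →ₐ[k] kbar) (A →ₐ[k] kbar) ℚ :=
      fun f q p => f (π (j.symm (p, q)))
    ∃ e : {f : MaximalSpectrum (A ⊗[k] B) →₀ ℚ // Eqns (M f)} ≃ (B →ₐ[k] A),
      ∀ (f : {f : MaximalSpectrum (A ⊗[k] B) →₀ ℚ // Eqns (M f)})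
        (p : A →ₐ[k] kbar), M (f : _) (p.comp (e f)) p = 1 := by
  classical
  set M : (MaximalSpectrum (A ⊗[k] B) →₀ ℚ) → Matrix (B →ₐ[k] kbar) (A →ₐ[k] kbar) ℚ :=
    fun f q p => f (π (j.symm (p, q))) with hM
  haveI : Module.Finite k (A ⊗[k] B) := inferInstance
  haveI : Algebra.FormallyUnramified k (A ⊗[k] B) :=
    Algebra.FormallyUnramified.comp k A (A ⊗[k] B)
  haveI : IsArtinianRing A := isArtinian_of_tower k inferInstance
  haveI : IsArtinianRing (A ⊗[k] B) := isArtinian_of_tower k inferInstance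
  -- basic facts about `j`
  have hj1 : ∀ (pq : (A →ₐ[k] kbar) × (B →ₐ[k] kbar)) (a : A),
      (j.symm pq) (a ⊗ₜ[k] (1 : B)) = pq.1 a := by
    intro pq a
    have := (hj (j.symm pq)).1 a
    rw [Equiv.apply_symm_apply] at this
    exact this.symm
  have hj2 : ∀ (pq : (A →ₐ[k] kbar) × (B →ₐ[k] kbar)) (b : B),
      (j.symm pq) ((1 : A) ⊗ₜ[k] b) = pq.2 b := by
    intro pq b
    have := (hj (j.symm pq)).2 b
    rw [Equiv.apply_symm_apply] at this
    exact this.symm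
  have hπ_eq : ∀ σ σ' : (A ⊗[k] B) →ₐ[k] kbar,
      RingHom.ker σ.toRingHom = RingHom.ker σ'.toRingHom → π σ = π σ' := by
    intro σ σ' h
    exact MaximalSpectrum.ext ((hπ σ).trans (h.trans (hπ σ').symm))
  have hπ_ker : ∀ σ σ' : (A ⊗[k] B) →ₐ[k] kbar,
      π σ = π σ' → RingHom.ker σ.toRingHom = RingHom.ker σ'.toRingHom := by
    intro σ σ' h
    rw [← hπ σ, ← hπ σ', h]
  have hπ_surj : ∀ m : MaximalSpectrum (A ⊗[k] B), ∃ σ, π σ = m := by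
    intro m
    haveI := m.isMaximal
    obtain ⟨σ, hσ⟩ := exists_algHom_ker_eq (k := k) (kbar := kbar) m.asIdeal
    exact ⟨σ, MaximalSpectrum.ext ((hπ σ).trans hσ)⟩
  have hjτ : ∀ (τ : kbar →ₐ[k] kbar) (p : A →ₐ[k] kbar) (q : B →ₐ[k] kbar),
      j.symm (τ.comp p, τ.comp q) = τ.comp (j.symm (p, q)) := by
    intro τ p q
    apply j.injective
    rw [Equiv.apply_symm_apply]
    refine Prod.ext ?_ ?_
    · ext a
      rw [(hj (τ.comp (j.symm (p, q)))).1 a]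
      show τ.comp p a = (τ.comp (j.symm (p, q))) (a ⊗ₜ[k] 1)
      simp only [AlgHom.comp_apply]
      rw [hj1 (p, q) a]
    · ext b
      rw [(hj (τ.comp (j.symm (p, q)))).2 b]
      show τ.comp q b = (τ.comp (j.symm (p, q))) ((1 : A) ⊗ₜ[k] b)
      simp only [AlgHom.comp_apply]
      rw [hj2 (p, q) b]
  -- the graph function attached to a cycle satisfying the equations
  have hEU : ∀ (f : {f : MaximalSpectrum (A ⊗[k] B) →₀ ℚ // Eqns (M f)})
      (p : A →ₐ[k] kbar), ∃! q : B →ₐ[k] kbar, M f.1 q p = 1 := fun f p => eqns_graph f.2 p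
  choose g hg1 hgU using hEU
  have hgval : ∀ f (q : B →ₐ[k] kbar) (p : A →ₐ[k] kbar),
      M f.1 q p = if q = g f p then 1 else 0 := by
    intro f q p
    by_cases h : q = g f p
    · rw [if_pos h, h]; exact hg1 f p
    · rw [if_neg h]
      have h2 := ((eqns_iff (M f.1)).mp f.2).1 q (g f p) p
      rw [if_neg h, hg1 f p, mul_one] at h2
      exact h2
  have hgequiv : ∀ f (τ : kbar →ₐ[k] kbar) (p : A →ₐ[k] kbar),
      g f (τ.comp p) = τ.comp (g f p) := by
    intro f τ p
    refine (hgU f (τ.comp p) _ ?_).symm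
    show f.1 (π (j.symm (τ.comp p, τ.comp (g f p)))) = 1
    rw [hjτ, hπ_eq (τ.comp (j.symm (p, g f p))) (j.symm (p, g f p)) (ker_comp_left τ _)]
    exact hg1 f p
  -- the value of the graph function lies in the residue field of the source point
  have hrange : ∀ f (p : A →ₐ[k] kbar) (b : B), g f p b ∈ p.range := by
    intro f p b
    set σ0 : (A ⊗[k] B) →ₐ[k] kbar := j.symm (p, g f p) with hσ0
    have hpa : ∀ a : A, σ0 (a ⊗ₜ[k] 1) = p a := fun a => hj1 (p, g f p) a
    have hqb : ∀ b : B, σ0 ((1 : A) ⊗ₜ[k] b) = g f p b := fun b => hj2 (p, g f p) b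
    have hsub : p.range ≤ σ0.range := by
      rintro x ⟨a, rfl⟩
      exact ⟨a ⊗ₜ[k] 1, hpa a⟩
    have hfib :
        Nat.card {σ' : (A ⊗[k] B) →ₐ[k] kbar //
            RingHom.ker σ'.toRingHom = RingHom.ker σ0.toRingHom}
          = Nat.card {p' : A →ₐ[k] kbar //
            RingHom.ker p'.toRingHom = RingHom.ker p.toRingHom} := by
      apply Nat.card_congr
      have key : ∀ σ' : (A ⊗[k] B) →ₐ[k] kbar,
          RingHom.ker σ'.toRingHom = RingHom.ker σ0.toRingHom →
          ∃ τ : kbar →ₐ[k] kbar, j σ' = (τ.comp p, τ.comp (g f p)) := by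
        intro σ' hσ'
        obtain ⟨τ, hτ⟩ := conj_of_ker_eq σ0 σ' hσ'.symm
        refine ⟨τ, ?_⟩
        rw [hτ, hσ0, ← hjτ, Equiv.apply_symm_apply]
      refine ⟨fun σ' => ⟨(j σ'.1).1, ?_⟩, fun p' => ⟨j.symm (p'.1, g f p'.1), ?_⟩, ?_, ?_⟩
      · obtain ⟨τ, hτ⟩ := key σ'.1 σ'.2
        rw [hτ]
        exact ker_comp_left τ p
      · obtain ⟨τ, hτ⟩ := conj_of_ker_eq p p'.1 p'.2.symm
        rw [hτ, hgequiv f τ p, hjτ, ← hσ0]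
        exact ker_comp_left τ σ0
      · intro σ'
        apply Subtype.ext
        obtain ⟨τ, hτ⟩ := key σ'.1 σ'.2
        show j.symm ((j σ'.1).1, g f (j σ'.1).1) = σ'.1
        rw [show ((j σ'.1).1, g f (j σ'.1).1) = j σ'.1 from ?_]
        · exact Equiv.symm_apply_apply j σ'.1
        · refine Prod.ext rfl ?_
          show g f (j σ'.1).1 = (j σ'.1).2
          rw [hτ]
          exact hgequiv f τ p
      · intro p'
        apply Subtype.ext
        show (j (j.symm (p'.1, g f p'.1))).1 = p'.1
        rw [Equiv.apply_symm_apply]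
    have h1 := finrank_range_eq_card (k := k) (kbar := kbar) σ0
    have h2 := finrank_range_eq_card (k := k) (kbar := kbar) p
    have hfr : Module.finrank k ↥σ0.range = Module.finrank k ↥p.range := by
      rw [h1, h2, hfib]
    have hFD : FiniteDimensional k ↥σ0.range := by
      have hfin : Module.Finite k ((A ⊗[k] B) ⧸ RingHom.ker σ0) :=
        Module.Finite.of_surjective (Ideal.Quotient.mkₐ k _).toLinearMap
          (Ideal.Quotient.mkₐ_surjective k _)
      exact Module.Finite.equiv (Ideal.quotientKerEquivRange σ0).toLinearEquiv
    have heq : p.range = σ0.range :=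
      Subalgebra.eq_of_le_of_finrank_eq hsub hfr.symm
    rw [heq]
    exact ⟨(1 : A) ⊗ₜ[k] b, hqb b⟩
  -- separation of points of A
  have hsepA : ∀ a a' : A, (∀ p : A →ₐ[k] kbar, p a = p a') → a = a' := by
    intro a a' h
    have h0 : ∀ p : A →ₐ[k] kbar, p (a - a') = 0 := fun p => by
      rw [map_sub, h p, sub_self]
    exact sub_eq_zero.mp (eval_eq_zero (k := k) (kbar := kbar) h0)
  -- Galois descent: construction of the algebra map
  have hdesc : ∀ f, ∃ h : B →ₐ[k] A, ∀ (p : A →ₐ[k] kbar) (b : B), p (h b) = g f p b := by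
    intro f
    have hex : ∀ b : B, ∃ a : A, ∀ p : A →ₐ[k] kbar, p a = g f p b := by
      intro b
      apply exists_forall_eval (k := k) (kbar := kbar) (u := fun p => g f p b)
      · intro τ p; rw [hgequiv f τ p]; rfl
      · intro p; exact hrange f p b
    choose hf hhf using hex
    have hone : hf 1 = 1 := hsepA _ _ (fun p => by rw [hhf 1 p, map_one, map_one])
    have hmul : ∀ x y, hf (x * y) = hf x * hf y := fun x y =>
      hsepA _ _ (fun p => by rw [hhf _ p, map_mul, map_mul, hhf _ p, hhf _ p])
    have hzero : hf 0 = 0 := hsepA _ _ (fun p => by rw [hhf 0 p, map_zero, map_zero])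
    have hadd : ∀ x y, hf (x + y) = hf x + hf y := fun x y =>
      hsepA _ _ (fun p => by rw [hhf _ p, map_add, map_add, hhf _ p, hhf _ p])
    have hcomm : ∀ c : k, hf (algebraMap k B c) = algebraMap k A c := fun c =>
      hsepA _ _ (fun p => by rw [hhf _ p, AlgHom.commutes, AlgHom.commutes])
    exact ⟨⟨⟨⟨⟨hf, hone⟩, hmul⟩, hzero, hadd⟩, hcomm⟩, fun p b => hhf b p⟩
  choose D hD using hdesc
  -- the cycle attached to an algebra map
  set cyc : (B →ₐ[k] A) → (MaximalSpectrum (A ⊗[k] B) →₀ ℚ) := fun h =>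
    Finsupp.indicator
      (Finset.image (fun p : A →ₐ[k] kbar => π (j.symm (p, p.comp h))) Finset.univ)
      (fun _ _ => 1) with hcycdef
  have hcyc : ∀ (h : B →ₐ[k] A) (p : A →ₐ[k] kbar) (q : B →ₐ[k] kbar),
      (cyc h) (π (j.symm (p, q))) = if q = p.comp h then 1 else 0 := by
    intro h p q
    by_cases hm : π (j.symm (p, q)) ∈
        Finset.image (fun p : A →ₐ[k] kbar => π (j.symm (p, p.comp h))) Finset.univ
    · rw [hcycdef]
      rw [Finsupp.indicator_of_mem hm]
      obtain ⟨p', -, hp'⟩ := Finset.mem_image.mp hm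
      have hk := hπ_ker _ _ hp'
      obtain ⟨τ, hτ⟩ := conj_of_ker_eq (j.symm (p', p'.comp h)) (j.symm (p, q)) hk
      rw [← hjτ] at hτ
      have h2 := j.symm.injective (hτ.trans (rfl : j.symm _ = j.symm (τ.comp p', τ.comp (p'.comp h))))
      have hp : p = τ.comp p' := congrArg Prod.fst h2
      have hq : q = τ.comp (p'.comp h) := congrArg Prod.snd h2
      rw [if_pos]
      rw [hq, hp, AlgHom.comp_assoc]
    · rw [hcycdef]
      rw [Finsupp.indicator_of_notMem hm]
      rw [if_neg]
      intro he
      exact hm (Finset.mem_image.mpr ⟨p, Finset.mem_univ p, by rw [← he]⟩)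
  have hcyc_eqns : ∀ h : B →ₐ[k] A, Eqns (M (cyc h)) := by
    intro h
    have hMe : M (cyc h) = fun q p => if q = p.comp h then 1 else 0 := by
      funext q p
      exact hcyc h p q
    rw [hMe]
    exact graph_eqns (fun p : A →ₐ[k] kbar => p.comp h)
  -- `p.comp (D f)` is the graph function
  have hDg : ∀ f (p : A →ₐ[k] kbar), p.comp (D f) = g f p := by
    intro f p
    ext b
    exact hD f p b
  have hcycD : ∀ f, cyc (D f) = f.1 := by
    intro f
    ext m
    obtain ⟨σ, rfl⟩ := hπ_surj m
    have hσ : σ = j.symm ((j σ).1, (j σ).2) := by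
      rw [Prod.mk.eta, Equiv.symm_apply_apply]
    rw [hσ, hcyc (D f) (j σ).1 (j σ).2, hDg f (j σ).1]
    have := hgval f (j σ).2 (j σ).1
    rw [show M f.1 (j σ).2 (j σ).1 = f.1 (π (j.symm ((j σ).1, (j σ).2))) from rfl] at this
    rw [← this]
  have hgD : ∀ (h : B →ₐ[k] A) (p : A →ₐ[k] kbar),
      g ⟨cyc h, hcyc_eqns h⟩ p = p.comp h := by
    intro h p
    refine (hgU ⟨cyc h, hcyc_eqns h⟩ p (p.comp h) ?_).symm
    show (cyc h) (π (j.symm (p, p.comp h))) = 1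
    rw [hcyc h p (p.comp h), if_pos rfl]
  refine ⟨⟨fun f => D f, fun h => ⟨cyc h, hcyc_eqns h⟩, ?_, ?_⟩, ?_⟩
  · intro f
    exact Subtype.ext (hcycD f)
  · intro h
    ext b
    refine hsepA _ _ (fun p => ?_)
    have h1 : p ((D ⟨cyc h, hcyc_eqns h⟩) b) = g ⟨cyc h, hcyc_eqns h⟩ p b :=
      hD ⟨cyc h, hcyc_eqns h⟩ p b
    rw [h1, hgD h p]
    rfl
  · intro f p
    show M f.1 (p.comp (D f)) p = 1
    rw [hDg f p]
    exact hg1 f p
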